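/- Let X be a finite indecomposable q-cycle set with |X| > 1 such that G(X) acts regularly on X. Then X is retractable, i.e., there exist distinct x, y ∈ X with σ_x = σ_y and δ_x = δ_y. -/

import Mathlib

/-- A finite indecomposable q-cycle set with |X| > 1 and regular permutation
group is retractable. -/
theorem qcs_regular_retractable {X : Type*} [Fintype X] (hX : 1 < Fintype.card X)
    (σ δ : X → Equiv.Perm X)
    (q1 : ∀ x y z : X, σ (σ x y) (σ x z) = σ (δ y x) (σ y z))
    (q2 : ∀ x y z : X, δ (δ x y) (δ x z) = δ (σ y x) (δ y z))
    (q3 : ∀ x y z : X, δ (σ x y) (σ x z) = σ (δ y x) (δ y z))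
    (htrans : ∀ x y : X,
      ∃ g ∈ Subgroup.closure {g : Equiv.Perm X | ∃ x, g = σ x ∨ g = δ x}, g x = y)
    (hreg : ∀ g ∈ Subgroup.closure {g : Equiv.Perm X | ∃ x, g = σ x ∨ g = δ x},
      ∀ x : X, g x = x → g = 1) :
    ∃ x y : X, x ≠ y ∧ σ x = σ y ∧ δ x = δ y := by
  by_contra hcon
  push_neg at hcon
  set G := Subgroup.closure {g : Equiv.Perm X | ∃ x, g = σ x ∨ g = δ x} with hG
  have memσ : ∀ x, σ x ∈ G := fun x => Subgroup.subset_closure ⟨x, Or.inl rfl⟩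
  have memδ : ∀ x, δ x ∈ G := fun x => Subgroup.subset_closure ⟨x, Or.inr rfl⟩
  -- joint injectivity
  have hinj : ∀ x y : X, σ x = σ y → δ x = δ y → x = y := by
    intro x y h1 h2
    by_contra hne
    exact hcon x y hne h1 h2
  -- Step 1: σ x = δ x for all x
  have hσδ : ∀ x, σ x = δ x := by
    intro x
    have hab : σ x x = δ x x := by
      apply hinj
      · ext w
        have h := q1 x x ((σ x).symm w)
        rwa [Equiv.apply_symm_apply] at h
      · ext w
        have h := q2 x x ((δ x).symm w)
        rw [Equiv.apply_symm_apply] at h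
        exact h.symm
    have hmem : σ x * (δ x)⁻¹ ∈ G := mul_mem (memσ x) (inv_mem (memδ x))
    have hfix : (σ x * (δ x)⁻¹) (δ x x) = δ x x := by
      rw [Equiv.Perm.mul_apply, Equiv.Perm.coe_inv, Equiv.symm_apply_apply]
      exact hab
    have h1 := hreg _ hmem _ hfix
    exact mul_inv_eq_one.mp h1
  -- Step 2: σ is injective
  have σinj : Function.Injective σ := by
    intro x y h
    exact hinj x y h (by rw [← hσδ x, ← hσδ y, h])
  -- Step 3: there is b with σ b = 1, via cardinality
  have : Nonempty X := Fintype.card_pos_iff.mp (by omega)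
  obtain ⟨x₀⟩ := this
  let e : G → X := fun g => (g : Equiv.Perm X) x₀
  have einj : Function.Injective e := by
    intro g1 g2 h
    have hmem : (g1 : Equiv.Perm X)⁻¹ * g2 ∈ G := mul_mem (inv_mem g1.2) g2.2
    have hfix : ((g1 : Equiv.Perm X)⁻¹ * g2) x₀ = x₀ := by
      rw [Equiv.Perm.mul_apply]
      simp only [e] at h
      rw [← h, Equiv.Perm.coe_inv, Equiv.symm_apply_apply]
    have h1 := hreg _ hmem _ hfix
    have h2 : (g1 : Equiv.Perm X) = g2 := by
      have := inv_mul_eq_one.mp h1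
      exact this
    exact Subtype.ext h2
  let σ' : X → G := fun x => ⟨σ x, memσ x⟩
  have σ'inj : Function.Injective σ' := fun x y h =>
    σinj (congrArg Subtype.val h)
  have hsurj : Function.Surjective (e ∘ σ') :=
    Finite.injective_iff_surjective.mp (einj.comp σ'inj)
  obtain ⟨b, hb⟩ := hsurj (e ⟨1, one_mem G⟩)
  have hσb : σ b = 1 := congrArg Subtype.val (einj hb)
  -- Step 4: every δ y fixes b, hence all permutations are trivial
  have hδ1 : ∀ y, δ y = 1 := by
    intro y
    have h1 : σ (δ y b) = σ b := by
      ext w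
      have h := q1 b y ((σ y).symm w)
      rw [hσb] at h
      simp only [Equiv.Perm.coe_one, id_eq, Equiv.apply_symm_apply] at h
      rw [hσb, ← h]
      simp
    exact hreg _ (memδ y) b (by rw [σinj h1])
  obtain ⟨x, y, hxy⟩ := Fintype.exists_pair_of_one_lt_card hX
  exact hcon x y hxy (by rw [hσδ x, hσδ y, hδ1 x, hδ1 y]) (by rw [hδ1 x, hδ1 y])
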